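/- Let ≼ be a monomial order on the monomials of Z2[X] such that s ≺ α for every α ∈ C. Then C ⊆ S_𝓕, i.e. every α ∈ C is non-residual with respect to 𝓕 and ≼. -/

import Mathlib

open MvPolynomial

/-- Monomials in the variables `σ`, represented by their exponent vectors. -/
abbrev Mon (σ : Type*) := σ →₀ ℕ

/-- A monomial order: a total order on monomials such that `1 ≼ t` for every monomial `t`
and `t ≼ u → t·v ≼ u·v` (written additively on exponent vectors). -/
structure MonOrd (σ : Type*) where
  le : Mon σ → Mon σ → Prop
  le_refl : ∀ t, le t t
  le_trans : ∀ t u v, le t u → le u v → le t v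
  le_antisymm : ∀ t u, le t u → le u t → t = u
  le_total : ∀ t u, le t u ∨ le u t
  zero_le : ∀ t, le 0 t
  add_le_add : ∀ t u v, le t u → le (t + v) (u + v)

/-- Strict version of a monomial order. -/
def MonOrd.lt {σ : Type*} (μ : MonOrd σ) (t u : Mon σ) : Prop := μ.le t u ∧ t ≠ u

/-- The extension of a monomial order (given by the relation `r` on monomials) to polynomials:
`g ≼ f` iff `g = f` or the greatest monomial on which `f` and `g` differ occurs in `f`.
(This is the closed form of the recursive definition: `g ≼ f` iff `g = f`, or
`HT g ≺ HT f`, or `HT g = HT f` and `g - HT g ≼ f - HT f`, with `0` the least polynomial.) -/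
def polyLe {σ : Type*} (r : Mon σ → Mon σ → Prop) (g f : MvPolynomial σ (ZMod 2)) : Prop :=
  g = f ∨ ∃ t, t ∈ f.support ∧ t ∉ g.support ∧
    ∀ u : Mon σ, ((u ∈ f.support ∧ u ∉ g.support) ∨ (u ∈ g.support ∧ u ∉ f.support)) → r u t

/-- Strict extension of a monomial order to polynomials. -/
def polyLt {σ : Type*} (r : Mon σ → Mon σ → Prop) (g f : MvPolynomial σ (ZMod 2)) : Prop :=
  polyLe r g f ∧ g ≠ f

/-- `S_F`: the set of non-residual polynomials with respect to `F` and the monomial order `r`,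
i.e. those `f` admitting a `g` with `f + g ∈ ⟨F⟩` and `g ≺ f`. -/
def SF {σ : Type*} (r : Mon σ → Mon σ → Prop) (F : Set (MvPolynomial σ (ZMod 2))) :
    Set (MvPolynomial σ (ZMod 2)) :=
  {f | ∃ g, f + g ∈ Ideal.span F ∧ polyLt r g f}

/-- `t` is the head monomial (`r`-greatest monomial) of the polynomial `f`. -/
def IsHT {σ : Type*} (r : Mon σ → Mon σ → Prop) (f : MvPolynomial σ (ZMod 2)) (t : Mon σ) :
    Prop :=
  t ∈ f.support ∧ ∀ u ∈ f.support, r u t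

/-- `HT(S)`: the set of head monomials (as polynomials) of the nonzero elements of `S`. -/
def HTset {σ : Type*} (r : Mon σ → Mon σ → Prop) (S : Set (MvPolynomial σ (ZMod 2))) :
    Set (MvPolynomial σ (ZMod 2)) :=
  {p | ∃ f ∈ S, f ≠ 0 ∧ ∃ t, IsHT r f t ∧ p = monomial t 1}

/-- The divisibility (componentwise) order `◁` on monomials. -/
def triMon {σ : Type*} (t u : Mon σ) : Prop := ∀ x, t x ≤ u x

/-- The order `◁` on polynomials: `p ◁ q` iff there is an injective map `φ` from the
monomials of `p` to the monomials of `q` with `t ◁ φ t` for each monomial `t` of `p`. -/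
def triPoly {σ : Type*} (p q : MvPolynomial σ (ZMod 2)) : Prop :=
  ∃ φ : Mon σ → Mon σ, Set.InjOn φ ↑p.support ∧ ∀ t ∈ p.support, φ t ∈ q.support ∧ triMon t (φ t)

/-- Upward closure with respect to `◁`. -/
def upClo {σ : Type*} (A : Set (MvPolynomial σ (ZMod 2))) : Set (MvPolynomial σ (ZMod 2)) :=
  {q | ∃ p ∈ A, triPoly p q}

/-- `Min_◁(A)`: the `◁`-minimal elements of `A`. -/
def minTri {σ : Type*} (A : Set (MvPolynomial σ (ZMod 2))) : Set (MvPolynomial σ (ZMod 2)) :=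
  {p | p ∈ A ∧ ∀ q ∈ A, triPoly q p → q = p}

/-- `G` is a Gröbner basis of the ideal `I` with respect to the monomial order `r`. -/
def IsGB {σ : Type*} (r : Mon σ → Mon σ → Prop) (G : Finset (MvPolynomial σ (ZMod 2)))
    (I : Ideal (MvPolynomial σ (ZMod 2))) : Prop :=
  (↑G : Set (MvPolynomial σ (ZMod 2))) ⊆ ↑I ∧
    Ideal.span (↑G : Set (MvPolynomial σ (ZMod 2))) = I ∧
    Ideal.span (HTset r (↑I : Set (MvPolynomial σ (ZMod 2)))) = Ideal.span (HTset r ↑G)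

/-- `G` is a reduced Gröbner basis of `I` with respect to `r`. -/
def IsReducedGB {σ : Type*} (r : Mon σ → Mon σ → Prop) (G : Finset (MvPolynomial σ (ZMod 2)))
    (I : Ideal (MvPolynomial σ (ZMod 2))) : Prop :=
  IsGB r G I ∧ ∀ f ∈ G, ¬ ∀ t ∈ f.support,
    (monomial t 1 : MvPolynomial σ (ZMod 2)) ∈
      Ideal.span (HTset r ((↑G : Set (MvPolynomial σ (ZMod 2))) \ {f}))

/-- The variable set `X`: the special variables `s, ℓ, c, c̄, b, b̄` together with, for each
`0 ≤ i ≤ n`, the variables `s_i, f_i, q_{ji}, c_{ji}, b_{ji}` (`1 ≤ j ≤ 4`, encoded by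
`j : Fin 4`) and their barred copies (`bar = true`). -/
inductive MVar (n : ℕ) : Type where
  | vs | vl | vc | vcb | vb | vbb
  | vS (bar : Bool) (i : Fin (n+1))
  | vF (bar : Bool) (i : Fin (n+1))
  | vQ (bar : Bool) (j : Fin 4) (i : Fin (n+1))
  | vC (bar : Bool) (j : Fin 4) (i : Fin (n+1))
  | vB (bar : Bool) (j : Fin 4) (i : Fin (n+1))
deriving DecidableEq

open MVar

abbrev MPoly (n : ℕ) := MvPolynomial (MVar n) (ZMod 2)

/-- `e(n) = 2^(2^n)`. -/
def en (n : ℕ) : ℕ := 2 ^ 2 ^ n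

/-- The set `P_0` (barred copy if `bar = true`). -/
def P0 (n : ℕ) (bar : Bool) : Set (MPoly n) :=
  {p | ∃ j : Fin 4, p =
    X (vB bar j 0) ^ 2 * X (vC bar j 0) * X (vF bar 0) + X (vC bar j 0) * X (vS bar 0)}

/-- The set `P_m` for `m = i+1`, `i : Fin n` (barred copy if `bar = true`).
Here `i.succ` plays the role of `m` and `i.castSucc` the role of `m-1`; the indices
`1,2,3,4` of the paper are encoded as `0,1,2,3 : Fin 4`. -/
def Pm (n : ℕ) (bar : Bool) (i : Fin n) : Set (MPoly n) :=
  ({ X (vQ bar 0 i.succ) * X (vC bar 0 i.castSucc) * X (vS bar i.castSucc) + X (vS bar i.succ),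
    X (vQ bar 1 i.succ) * X (vC bar 1 i.castSucc) * X (vS bar i.castSucc)
      + X (vQ bar 0 i.succ) * X (vB bar 0 i.castSucc) * X (vC bar 0 i.castSucc)
        * X (vF bar i.castSucc),
    X (vQ bar 2 i.succ) * X (vC bar 2 i.castSucc) * X (vF bar i.castSucc)
      + X (vQ bar 1 i.succ) * X (vC bar 1 i.castSucc) * X (vF bar i.castSucc),
    X (vQ bar 2 i.succ) * X (vB bar 0 i.castSucc) * X (vC bar 2 i.castSucc)
        * X (vS bar i.castSucc)
      + X (vQ bar 1 i.succ) * X (vB bar 3 i.castSucc) * X (vC bar 1 i.castSucc)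
        * X (vS bar i.castSucc),
    X (vQ bar 3 i.succ) * X (vB bar 3 i.castSucc) * X (vC bar 3 i.castSucc)
        * X (vF bar i.castSucc)
      + X (vQ bar 2 i.succ) * X (vC bar 2 i.castSucc) * X (vS bar i.castSucc),
    X (vQ bar 3 i.succ) * X (vC bar 3 i.castSucc) * X (vS bar i.castSucc)
      + X (vF bar i.succ) } : Set (MPoly n))
  ∪ {p | ∃ j : Fin 4, p =
      X (vQ bar 1 i.succ) * X (vB bar 2 i.castSucc) * X (vB bar j i.succ) * X (vC bar j i.succ)
          * X (vF bar i.castSucc)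
        + X (vQ bar 1 i.succ) * X (vB bar 1 i.castSucc) * X (vC bar j i.succ)
          * X (vF bar i.castSucc)}

/-- The set `P = P_0 ∪ P_1 ∪ ⋯ ∪ P_n`; for `bar = true` this is the barred copy `P̄`
(the image of `P` under the substitution replacing each variable by its barred version). -/
def PP (n : ℕ) (bar : Bool) : Set (MPoly n) := P0 n bar ∪ ⋃ i : Fin n, Pm n bar i

/-- The set `G` of seven extra binomials. -/
def GG (n : ℕ) : Set (MPoly n) :=
  { X (vB false 3 (Fin.last n)) * X vl * X vb + X vl * X vc,
    X (vB false 3 (Fin.last n)) * X vl * X vbb + X vl * X vcb,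
    X (vC false 3 (Fin.last n)) * X (vF false (Fin.last n)) + X vl,
    X (vC true 3 (Fin.last n)) * X (vF true (Fin.last n))
      + X (vC false 3 (Fin.last n)) * X (vS false (Fin.last n)),
    X (vB true 3 (Fin.last n)) * X (vC false 3 (Fin.last n)) * X (vS false (Fin.last n))
      + X (vC false 3 (Fin.last n)) * X (vS false (Fin.last n)) * X vb,
    X (vB true 3 (Fin.last n)) * X (vC false 3 (Fin.last n)) * X (vS false (Fin.last n))
      + X (vC false 3 (Fin.last n)) * X (vS false (Fin.last n)) * X vbb,
    X (vC true 3 (Fin.last n)) * X (vS true (Fin.last n)) + X vs }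

/-- The set `𝓕 = P ∪ P̄ ∪ G`. -/
def FF (n : ℕ) : Set (MPoly n) := PP n false ∪ PP n true ∪ GG n

/-- The set `C = {ℓ c̄^{m1} c^{m2} : m1 + m2 = e(n)}` of monomials. -/
def Cmon (n : ℕ) : Set (Mon (MVar n)) :=
  {α | ∃ m1 m2 : ℕ, m1 + m2 = en n ∧
    α = Finsupp.single vl 1 + Finsupp.single vcb m1 + Finsupp.single vc m2}

/-- The set `D = {ℓ^j c̄^{m1} c^{m2} : j ∈ {0,1}, j + m1 + m2 ≤ e(n)}` of monomials. -/
def Dmon (n : ℕ) : Set (Mon (MVar n)) :=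
  {α | ∃ j m1 m2 : ℕ, j ≤ 1 ∧ j + m1 + m2 ≤ en n ∧
    α = Finsupp.single vl j + Finsupp.single vcb m1 + Finsupp.single vc m2}

/-- An injective rank function on the variables realizing the variable ordering
(from least to greatest): `s, c, c̄, ℓ, b, b̄`; then `s_0,…,s_n`; `f_0,…,f_n`;
`c_{10},…,c_{1n}; …; c_{40},…,c_{4n}`; `b_{10},…,b_{4n}`; `q_{10},…,q_{4n}`;
then the barred variables in the same pattern. -/
def vrank (n : ℕ) : MVar n → ℕ
  | .vs => 0
  | .vc => 1
  | .vcb => 2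
  | .vl => 3
  | .vb => 4
  | .vbb => 5
  | .vS bar i => 6 + (cond bar (14 * (n+1)) 0) + (i : ℕ)
  | .vF bar i => 6 + (cond bar (14 * (n+1)) 0) + (n+1) + (i : ℕ)
  | .vC bar j i => 6 + (cond bar (14 * (n+1)) 0) + 2*(n+1) + (j : ℕ)*(n+1) + (i : ℕ)
  | .vB bar j i => 6 + (cond bar (14 * (n+1)) 0) + 6*(n+1) + (j : ℕ)*(n+1) + (i : ℕ)
  | .vQ bar j i => 6 + (cond bar (14 * (n+1)) 0) + 10*(n+1) + (j : ℕ)*(n+1) + (i : ℕ)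

/-- The lexicographic monomial order on `X`: `t ≼_lex u` iff `t = u` or the exponents differ
somewhere and at the greatest variable (w.r.t. `vrank`) where they differ, the exponent of
`t` is smaller. -/
def lexLe (n : ℕ) (t u : Mon (MVar n)) : Prop :=
  t = u ∨ ∃ x : MVar n, t x < u x ∧ ∀ y : MVar n, vrank n x < vrank n y → t y = u y

/-- The total degree of a monomial. -/
def mdeg {σ : Type*} (t : Mon σ) : ℕ := t.sum fun _ k => k

/-- The degree lexicographic monomial order. -/
def degLexLe (n : ℕ) (t u : Mon (MVar n)) : Prop :=
  mdeg t < mdeg u ∨ (mdeg t = mdeg u ∧ lexLe n t u)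

/-- Weighted degree of a monomial with respect to a weight map `w`. -/
noncomputable def wdeg {n : ℕ} (w : MVar n → ℝ) (t : Mon (MVar n)) : ℝ :=
  t.sum fun x k => (k : ℝ) * w x

/-- The weighted monomial order determined by the weight map `w`. -/
def wLe {n : ℕ} (w : MVar n → ℝ) (t u : Mon (MVar n)) : Prop := t = u ∨ wdeg w t < wdeg w u



namespace Stmt8Aux
open MVar

set_option maxHeartbeats 1000000
set_option synthInstance.maxHeartbeats 400000

noncomputable def pr (n : ℕ) : MPoly n →+* MPoly n ⧸ Ideal.span (FF n) :=
  Ideal.Quotient.mk _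

noncomputable def xx (n : ℕ) (v : MVar n) : MPoly n ⧸ Ideal.span (FF n) := pr n (X v)

lemma pr_X (n : ℕ) (v : MVar n) : pr n (X v) = xx n v := rfl

lemma two_eq_zero (n : ℕ) : (2 : MPoly n ⧸ Ideal.span (FF n)) = 0 := by
  have hp : (2 : MPoly n) = 0 := by
    exact_mod_cast CharP.cast_eq_zero (MPoly n) 2
  rw [← map_ofNat (pr n) 2, hp, map_zero]

lemma eq_of_add_eq_zero {n : ℕ} {a b : MPoly n ⧸ Ideal.span (FF n)} (h : a + b = 0) :
    a = b := by
  linear_combination h - b * two_eq_zero n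

lemma rel {n : ℕ} {p q : MPoly n} (h : p + q ∈ FF n) : pr n p = pr n q := by
  have h0 : pr n (p + q) = 0 := Ideal.Quotient.eq_zero_iff_mem.mpr (Ideal.subset_span h)
  rw [map_add] at h0
  exact eq_of_add_eq_zero h0

lemma PP_sub {n : ℕ} (bar : Bool) : PP n bar ⊆ FF n := by
  cases bar
  · exact fun p hp => Set.mem_union_left _ (Set.mem_union_left _ hp)
  · exact fun p hp => Set.mem_union_left _ (Set.mem_union_right _ hp)

lemma P0_mem {n : ℕ} (bar : Bool) {p : MPoly n} (hp : p ∈ P0 n bar) : p ∈ FF n :=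
  PP_sub bar (Set.mem_union_left _ hp)

lemma Pm_mem {n : ℕ} (bar : Bool) (i : Fin n) {p : MPoly n} (hp : p ∈ Pm n bar i) :
    p ∈ FF n :=
  PP_sub bar (Set.mem_union_right _ (Set.mem_iUnion_of_mem i hp))

lemma GG_mem {n : ℕ} {p : MPoly n} (hp : p ∈ GG n) : p ∈ FF n :=
  Set.mem_union_right _ hp

/-- Base relation from `P0`. -/
lemma rel0 {n : ℕ} (bar : Bool) (j : Fin 4) :
    xx n (vB bar j 0) ^ 2 * xx n (vC bar j 0) * xx n (vF bar 0)
      = xx n (vC bar j 0) * xx n (vS bar 0) := by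
  have h := rel (P0_mem (n := n) bar ⟨j, rfl⟩)
  simpa only [map_mul, map_pow, pr_X] using h

section PmRels
variable {n : ℕ} (bar : Bool) (i : Fin n)

lemma relm1 :
    xx n (vQ bar 0 i.succ) * xx n (vC bar 0 i.castSucc) * xx n (vS bar i.castSucc)
      = xx n (vS bar i.succ) := by
  have h := rel (Pm_mem (n := n) bar i (Or.inl (Set.mem_insert _ _)))
  simpa only [map_mul, pr_X] using h

lemma relm2 :
    xx n (vQ bar 1 i.succ) * xx n (vC bar 1 i.castSucc) * xx n (vS bar i.castSucc)
      = xx n (vQ bar 0 i.succ) * xx n (vB bar 0 i.castSucc) * xx n (vC bar 0 i.castSucc)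
        * xx n (vF bar i.castSucc) := by
  have h := rel (Pm_mem (n := n) bar i
    (Or.inl (Set.mem_insert_of_mem _ (Set.mem_insert _ _))))
  simpa only [map_mul, pr_X] using h

lemma relm3 :
    xx n (vQ bar 2 i.succ) * xx n (vC bar 2 i.castSucc) * xx n (vF bar i.castSucc)
      = xx n (vQ bar 1 i.succ) * xx n (vC bar 1 i.castSucc) * xx n (vF bar i.castSucc) := by
  have h := rel (Pm_mem (n := n) bar i
    (Or.inl (Set.mem_insert_of_mem _ (Set.mem_insert_of_mem _ (Set.mem_insert _ _)))))
  simpa only [map_mul, pr_X] using h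

lemma relm4 :
    xx n (vQ bar 2 i.succ) * xx n (vB bar 0 i.castSucc) * xx n (vC bar 2 i.castSucc)
        * xx n (vS bar i.castSucc)
      = xx n (vQ bar 1 i.succ) * xx n (vB bar 3 i.castSucc) * xx n (vC bar 1 i.castSucc)
        * xx n (vS bar i.castSucc) := by
  have h := rel (Pm_mem (n := n) bar i
    (Or.inl (Set.mem_insert_of_mem _ (Set.mem_insert_of_mem _
      (Set.mem_insert_of_mem _ (Set.mem_insert _ _))))))
  simpa only [map_mul, pr_X] using h

lemma relm5 :
    xx n (vQ bar 3 i.succ) * xx n (vB bar 3 i.castSucc) * xx n (vC bar 3 i.castSucc)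
        * xx n (vF bar i.castSucc)
      = xx n (vQ bar 2 i.succ) * xx n (vC bar 2 i.castSucc) * xx n (vS bar i.castSucc) := by
  have h := rel (Pm_mem (n := n) bar i
    (Or.inl (Set.mem_insert_of_mem _ (Set.mem_insert_of_mem _
      (Set.mem_insert_of_mem _ (Set.mem_insert_of_mem _ (Set.mem_insert _ _)))))))
  simpa only [map_mul, pr_X] using h

lemma relm6 :
    xx n (vQ bar 3 i.succ) * xx n (vC bar 3 i.castSucc) * xx n (vS bar i.castSucc)
      = xx n (vF bar i.succ) := by
  have h := rel (Pm_mem (n := n) bar i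
    (Or.inl (Set.mem_insert_of_mem _ (Set.mem_insert_of_mem _
      (Set.mem_insert_of_mem _ (Set.mem_insert_of_mem _
        (Set.mem_insert_of_mem _ rfl)))))))
  simpa only [map_mul, pr_X] using h

lemma relm7 (j : Fin 4) :
    xx n (vQ bar 1 i.succ) * xx n (vB bar 2 i.castSucc) * xx n (vB bar j i.succ)
        * xx n (vC bar j i.succ) * xx n (vF bar i.castSucc)
      = xx n (vQ bar 1 i.succ) * xx n (vB bar 1 i.castSucc) * xx n (vC bar j i.succ)
        * xx n (vF bar i.castSucc) := by
  have h := rel (Pm_mem (n := n) bar i (Or.inr ⟨j, rfl⟩))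
  simpa only [map_mul, pr_X] using h

end PmRels

section GRels
variable {n : ℕ}

lemma relg1 : xx n (vB false 3 (Fin.last n)) * xx n vl * xx n vb = xx n vl * xx n vc := by
  have h := rel (GG_mem (n := n) (Set.mem_insert _ _))
  simpa only [map_mul, pr_X] using h

lemma relg2 : xx n (vB false 3 (Fin.last n)) * xx n vl * xx n vbb = xx n vl * xx n vcb := by
  have h := rel (GG_mem (n := n) (Set.mem_insert_of_mem _ (Set.mem_insert _ _)))
  simpa only [map_mul, pr_X] using h

lemma relg3 : xx n (vC false 3 (Fin.last n)) * xx n (vF false (Fin.last n)) = xx n vl := by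
  have h := rel (GG_mem (n := n)
    (Set.mem_insert_of_mem _ (Set.mem_insert_of_mem _ (Set.mem_insert _ _))))
  simpa only [map_mul, pr_X] using h

lemma relg4 : xx n (vC true 3 (Fin.last n)) * xx n (vF true (Fin.last n))
    = xx n (vC false 3 (Fin.last n)) * xx n (vS false (Fin.last n)) := by
  have h := rel (GG_mem (n := n)
    (Set.mem_insert_of_mem _ (Set.mem_insert_of_mem _
      (Set.mem_insert_of_mem _ (Set.mem_insert _ _)))))
  simpa only [map_mul, pr_X] using h

lemma relg5 : xx n (vB true 3 (Fin.last n)) * xx n (vC false 3 (Fin.last n))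
      * xx n (vS false (Fin.last n))
    = xx n (vC false 3 (Fin.last n)) * xx n (vS false (Fin.last n)) * xx n vb := by
  have h := rel (GG_mem (n := n)
    (Set.mem_insert_of_mem _ (Set.mem_insert_of_mem _
      (Set.mem_insert_of_mem _ (Set.mem_insert_of_mem _ (Set.mem_insert _ _))))))
  simpa only [map_mul, pr_X] using h

lemma relg6 : xx n (vB true 3 (Fin.last n)) * xx n (vC false 3 (Fin.last n))
      * xx n (vS false (Fin.last n))
    = xx n (vC false 3 (Fin.last n)) * xx n (vS false (Fin.last n)) * xx n vbb := by
  have h := rel (GG_mem (n := n)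
    (Set.mem_insert_of_mem _ (Set.mem_insert_of_mem _
      (Set.mem_insert_of_mem _ (Set.mem_insert_of_mem _
        (Set.mem_insert_of_mem _ (Set.mem_insert _ _)))))))
  simpa only [map_mul, pr_X] using h

lemma relg7 : xx n (vC true 3 (Fin.last n)) * xx n (vS true (Fin.last n)) = xx n vs := by
  have h := rel (GG_mem (n := n)
    (Set.mem_insert_of_mem _ (Set.mem_insert_of_mem _
      (Set.mem_insert_of_mem _ (Set.mem_insert_of_mem _
        (Set.mem_insert_of_mem _ (Set.mem_insert_of_mem _ rfl)))))))
  simpa only [map_mul, pr_X] using h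

end GRels

/-- The key inductive lemma: `c_{jm} s_m = b_{jm}^{2^{2^m}} (c_{jm} f_m)` mod the ideal. -/
lemma key (n : ℕ) (bar : Bool) : ∀ (m : Fin (n+1)) (j : Fin 4),
    xx n (vC bar j m) * xx n (vS bar m)
      = xx n (vB bar j m) ^ 2 ^ 2 ^ (m : ℕ) * (xx n (vC bar j m) * xx n (vF bar m)) := by
  intro m
  induction m using Fin.induction with
  | zero =>
    intro j
    have h := rel0 (n := n) bar j
    simp only [Fin.val_zero, pow_zero, pow_one]
    linear_combination -h
  | succ i ih =>
    intro j
    set E := 2 ^ 2 ^ (i : ℕ) with hE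
    obtain ⟨D, hD⟩ : ∃ D, E = D + 1 :=
      ⟨E - 1, (Nat.succ_pred_eq_of_pos (Nat.pow_pos (by norm_num))).symm⟩
    have hEE : 2 ^ 2 ^ ((i : ℕ) + 1) = E * E := by
      rw [hE, pow_succ, pow_mul, pow_two]
    set Q0 := xx n (vQ bar 0 i.succ) with hQ0
    set Q1 := xx n (vQ bar 1 i.succ) with hQ1
    set Q2 := xx n (vQ bar 2 i.succ) with hQ2
    set Q3 := xx n (vQ bar 3 i.succ) with hQ3
    set B0 := xx n (vB bar 0 i.castSucc) with hB0
    set B1 := xx n (vB bar 1 i.castSucc) with hB1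
    set B2 := xx n (vB bar 2 i.castSucc) with hB2
    set B3 := xx n (vB bar 3 i.castSucc) with hB3
    set C0 := xx n (vC bar 0 i.castSucc) with hC0
    set C1 := xx n (vC bar 1 i.castSucc) with hC1
    set C2 := xx n (vC bar 2 i.castSucc) with hC2
    set C3 := xx n (vC bar 3 i.castSucc) with hC3
    set S' := xx n (vS bar i.castSucc) with hS'
    set F' := xx n (vF bar i.castSucc) with hF'
    set Bj := xx n (vB bar j i.succ) with hBj
    set Cj := xx n (vC bar j i.succ) with hCj
    set Sm := xx n (vS bar i.succ) with hSm
    set Fm := xx n (vF bar i.succ) with hFm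
    have ih0 := ih 0
    have ih1 := ih 1
    have ih2 := ih 2
    have ih3 := ih 3
    simp only [Fin.coe_castSucc, ← hE, ← hB0, ← hB1, ← hB2, ← hB3, ← hC0, ← hC1, ← hC2,
      ← hC3, ← hS', ← hF'] at ih0 ih1 ih2 ih3
    have r1 := relm1 (n := n) bar i
    have r2 := relm2 (n := n) bar i
    have r3 := relm3 (n := n) bar i
    have r4 := relm4 (n := n) bar i
    have r5 := relm5 (n := n) bar i
    have r6 := relm6 (n := n) bar i
    have r7 := relm7 (n := n) bar i j
    -- subA : trade `B1` factors for `B2 * Bj` factors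
    have subA : ∀ k : ℕ, Q1 * B1 ^ k * (Cj * F')
        = B2 ^ k * Bj ^ k * (Q1 * (Cj * F')) := by
      intro k
      induction k with
      | zero => ring
      | succ k ihk =>
        calc Q1 * B1 ^ (k + 1) * (Cj * F')
            = B1 ^ k * (Q1 * B1 * Cj * F') := by ring
          _ = B1 ^ k * (Q1 * B2 * Bj * Cj * F') := by linear_combination (-(B1 ^ k)) * r7
          _ = B2 * Bj * (Q1 * B1 ^ k * (Cj * F')) := by ring
          _ = B2 * Bj * (B2 ^ k * Bj ^ k * (Q1 * (Cj * F'))) := by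
              linear_combination (B2 * Bj) * ihk
          _ = B2 ^ (k + 1) * Bj ^ (k + 1) * (Q1 * (Cj * F')) := by ring
    -- subB : the main loop
    have subB : ∀ k : ℕ, Q2 * B0 ^ k * (C2 * S' * Cj)
        = B3 ^ k * (Bj ^ E) ^ k * (Q2 * (C2 * S' * Cj)) := by
      intro k
      induction k with
      | zero => ring
      | succ k ihk =>
        calc Q2 * B0 ^ (k + 1) * (C2 * S' * Cj)
            = B0 ^ k * Cj * (Q2 * B0 * C2 * S') := by ring
          _ = B0 ^ k * Cj * (Q1 * B3 * C1 * S') := by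
              linear_combination (B0 ^ k * Cj) * r4
          _ = B0 ^ k * Cj * Q1 * B3 * (C1 * S') := by ring
          _ = B0 ^ k * Cj * Q1 * B3 * (B1 ^ E * (C1 * F')) := by
              linear_combination (B0 ^ k * Cj * Q1 * B3) * ih1
          _ = B0 ^ k * B3 * C1 * (Q1 * B1 ^ E * (Cj * F')) := by ring
          _ = B0 ^ k * B3 * C1 * (B2 ^ E * Bj ^ E * (Q1 * (Cj * F'))) := by
              linear_combination (B0 ^ k * B3 * C1) * subA E
          _ = B0 ^ k * B3 * B2 ^ E * Bj ^ E * Cj * (Q1 * C1 * F') := by ring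
          _ = B0 ^ k * B3 * B2 ^ E * Bj ^ E * Cj * (Q2 * C2 * F') := by
              linear_combination (-(B0 ^ k * B3 * B2 ^ E * Bj ^ E * Cj)) * r3
          _ = B0 ^ k * B3 * Bj ^ E * Cj * Q2 * (B2 ^ E * (C2 * F')) := by ring
          _ = B0 ^ k * B3 * Bj ^ E * Cj * Q2 * (C2 * S') := by
              linear_combination (-(B0 ^ k * B3 * Bj ^ E * Cj * Q2)) * ih2
          _ = B3 * Bj ^ E * (Q2 * B0 ^ k * (C2 * S' * Cj)) := by ring
          _ = B3 * Bj ^ E * (B3 ^ k * (Bj ^ E) ^ k * (Q2 * (C2 * S' * Cj))) := by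
              linear_combination (B3 * Bj ^ E) * ihk
          _ = B3 ^ (k + 1) * (Bj ^ E) ^ (k + 1) * (Q2 * (C2 * S' * Cj)) := by ring
    have main : Cj * Sm = Bj ^ (E * E) * (Cj * Fm) := by
      calc Cj * Sm
          = Cj * (Q0 * C0 * S') := by linear_combination (-Cj) * r1
        _ = Cj * Q0 * (C0 * S') := by ring
        _ = Cj * Q0 * (B0 ^ E * (C0 * F')) := by linear_combination (Cj * Q0) * ih0
        _ = B0 ^ D * Cj * (Q0 * B0 * C0 * F') := by rw [hD]; ring
        _ = B0 ^ D * Cj * (Q1 * C1 * S') := by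
            linear_combination (-(B0 ^ D * Cj)) * r2
        _ = B0 ^ D * Cj * Q1 * (C1 * S') := by ring
        _ = B0 ^ D * Cj * Q1 * (B1 ^ E * (C1 * F')) := by
            linear_combination (B0 ^ D * Cj * Q1) * ih1
        _ = B0 ^ D * C1 * (Q1 * B1 ^ E * (Cj * F')) := by ring
        _ = B0 ^ D * C1 * (B2 ^ E * Bj ^ E * (Q1 * (Cj * F'))) := by
            linear_combination (B0 ^ D * C1) * subA E
        _ = B0 ^ D * B2 ^ E * Bj ^ E * Cj * (Q1 * C1 * F') := by ring
        _ = B0 ^ D * B2 ^ E * Bj ^ E * Cj * (Q2 * C2 * F') := by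
            linear_combination (-(B0 ^ D * B2 ^ E * Bj ^ E * Cj)) * r3
        _ = B0 ^ D * Bj ^ E * Cj * Q2 * (B2 ^ E * (C2 * F')) := by ring
        _ = B0 ^ D * Bj ^ E * Cj * Q2 * (C2 * S') := by
            linear_combination (-(B0 ^ D * Bj ^ E * Cj * Q2)) * ih2
        _ = Bj ^ E * (Q2 * B0 ^ D * (C2 * S' * Cj)) := by ring
        _ = Bj ^ E * (B3 ^ D * (Bj ^ E) ^ D * (Q2 * (C2 * S' * Cj))) := by
            linear_combination (Bj ^ E) * subB D
        _ = (Bj ^ E) ^ (D + 1) * B3 ^ D * Cj * (Q2 * C2 * S') := by ring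
        _ = (Bj ^ E) ^ (D + 1) * B3 ^ D * Cj * (Q3 * B3 * C3 * F') := by
            linear_combination (-((Bj ^ E) ^ (D + 1) * B3 ^ D * Cj)) * r5
        _ = (Bj ^ E) ^ (D + 1) * Cj * Q3 * (B3 ^ (D + 1) * (C3 * F')) := by ring
        _ = (Bj ^ E) ^ (D + 1) * Cj * Q3 * (C3 * S') := by
            rw [← hD]
            linear_combination (-((Bj ^ E) ^ E * Cj * Q3)) * ih3
        _ = (Bj ^ E) ^ (D + 1) * Cj * (Q3 * C3 * S') := by ring
        _ = (Bj ^ E) ^ (D + 1) * Cj * Fm := by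
            linear_combination ((Bj ^ E) ^ (D + 1) * Cj) * r6
        _ = Bj ^ (E * E) * (Cj * Fm) := by rw [← hD, ← pow_mul]; ring
    rw [Fin.val_succ, hEE]
    exact main

/-- The final computation: `ℓ c̄^{m1} c^{m2} = s` in the quotient. -/
lemma mainQ (n : ℕ) (m1 m2 : ℕ) (hm : m1 + m2 = en n) :
    xx n vl * xx n vcb ^ m1 * xx n vc ^ m2 = xx n vs := by
  set L := Fin.last n with hL
  set B := xx n (vB false 3 L) with hB
  set Bb := xx n (vB true 3 L) with hBb
  set C := xx n (vC false 3 L) with hC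
  set Cb := xx n (vC true 3 L) with hCb
  set S := xx n (vS false L) with hS
  set Sb := xx n (vS true L) with hSb
  set F := xx n (vF false L) with hF
  set Fb := xx n (vF true L) with hFb
  have g1 := relg1 (n := n)
  have g2 := relg2 (n := n)
  have g3 := relg3 (n := n)
  have g4 := relg4 (n := n)
  have g5 := relg5 (n := n)
  have g6 := relg6 (n := n)
  have g7 := relg7 (n := n)
  have hLval : ((L : Fin (n+1)) : ℕ) = n := Fin.val_last n
  have keyF : C * S = B ^ en n * (C * F) := by
    have h := key n false L 3
    rw [hLval] at h
    exact h
  have keyT : Cb * Sb = Bb ^ en n * (Cb * Fb) := by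
    have h := key n true L 3
    rw [hLval] at h
    exact h
  have ha : ∀ k : ℕ, xx n vl * xx n vc ^ k = B ^ k * xx n vl * xx n vb ^ k := by
    intro k
    induction k with
    | zero => ring
    | succ k ihk =>
      calc xx n vl * xx n vc ^ (k + 1)
          = (xx n vl * xx n vc) * xx n vc ^ k := by ring
        _ = (B * xx n vl * xx n vb) * xx n vc ^ k := by
            linear_combination (-(xx n vc ^ k)) * g1
        _ = B * xx n vb * (xx n vl * xx n vc ^ k) := by ring
        _ = B * xx n vb * (B ^ k * xx n vl * xx n vb ^ k) := by
            linear_combination (B * xx n vb) * ihk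
        _ = B ^ (k + 1) * xx n vl * xx n vb ^ (k + 1) := by ring
  have hab : ∀ k : ℕ, xx n vl * xx n vcb ^ k = B ^ k * xx n vl * xx n vbb ^ k := by
    intro k
    induction k with
    | zero => ring
    | succ k ihk =>
      calc xx n vl * xx n vcb ^ (k + 1)
          = (xx n vl * xx n vcb) * xx n vcb ^ k := by ring
        _ = (B * xx n vl * xx n vbb) * xx n vcb ^ k := by
            linear_combination (-(xx n vcb ^ k)) * g2
        _ = B * xx n vbb * (xx n vl * xx n vcb ^ k) := by ring
        _ = B * xx n vbb * (B ^ k * xx n vl * xx n vbb ^ k) := by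
            linear_combination (B * xx n vbb) * ihk
        _ = B ^ (k + 1) * xx n vl * xx n vbb ^ (k + 1) := by ring
  have hc1 : ∀ k : ℕ, (C * S) * xx n vb ^ k = Bb ^ k * (C * S) := by
    intro k
    induction k with
    | zero => ring
    | succ k ihk =>
      calc (C * S) * xx n vb ^ (k + 1)
          = (C * S * xx n vb) * xx n vb ^ k := by ring
        _ = (Bb * C * S) * xx n vb ^ k := by linear_combination (-(xx n vb ^ k)) * g5
        _ = Bb * ((C * S) * xx n vb ^ k) := by ring
        _ = Bb * (Bb ^ k * (C * S)) := by linear_combination Bb * ihk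
        _ = Bb ^ (k + 1) * (C * S) := by ring
  have hc2 : ∀ k : ℕ, (C * S) * xx n vbb ^ k = Bb ^ k * (C * S) := by
    intro k
    induction k with
    | zero => ring
    | succ k ihk =>
      calc (C * S) * xx n vbb ^ (k + 1)
          = (C * S * xx n vbb) * xx n vbb ^ k := by ring
        _ = (Bb * C * S) * xx n vbb ^ k := by linear_combination (-(xx n vbb ^ k)) * g6
        _ = Bb * ((C * S) * xx n vbb ^ k) := by ring
        _ = Bb * (Bb ^ k * (C * S)) := by linear_combination Bb * ihk
        _ = Bb ^ (k + 1) * (C * S) := by ring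
  calc xx n vl * xx n vcb ^ m1 * xx n vc ^ m2
      = (xx n vl * xx n vc ^ m2) * xx n vcb ^ m1 := by ring
    _ = (B ^ m2 * xx n vl * xx n vb ^ m2) * xx n vcb ^ m1 := by
        linear_combination (xx n vcb ^ m1) * ha m2
    _ = B ^ m2 * xx n vb ^ m2 * (xx n vl * xx n vcb ^ m1) := by ring
    _ = B ^ m2 * xx n vb ^ m2 * (B ^ m1 * xx n vl * xx n vbb ^ m1) := by
        linear_combination (B ^ m2 * xx n vb ^ m2) * hab m1
    _ = B ^ (m1 + m2) * xx n vl * xx n vbb ^ m1 * xx n vb ^ m2 := by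
        rw [pow_add]; ring
    _ = B ^ en n * xx n vl * xx n vbb ^ m1 * xx n vb ^ m2 := by rw [hm]
    _ = B ^ en n * (C * F) * xx n vbb ^ m1 * xx n vb ^ m2 := by
        linear_combination (-(B ^ en n * xx n vbb ^ m1 * xx n vb ^ m2)) * g3
    _ = (C * S) * xx n vbb ^ m1 * xx n vb ^ m2 := by
        linear_combination (-(xx n vbb ^ m1 * xx n vb ^ m2)) * keyF
    _ = ((C * S) * xx n vb ^ m2) * xx n vbb ^ m1 := by ring
    _ = (Bb ^ m2 * (C * S)) * xx n vbb ^ m1 := by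
        linear_combination (xx n vbb ^ m1) * hc1 m2
    _ = Bb ^ m2 * ((C * S) * xx n vbb ^ m1) := by ring
    _ = Bb ^ m2 * (Bb ^ m1 * (C * S)) := by linear_combination (Bb ^ m2) * hc2 m1
    _ = Bb ^ (m1 + m2) * (C * S) := by rw [pow_add]; ring
    _ = Bb ^ en n * (C * S) := by rw [hm]
    _ = Bb ^ en n * (Cb * Fb) := by linear_combination (-(Bb ^ en n)) * g4
    _ = Cb * Sb := by linear_combination -keyT
    _ = xx n vs := g7

lemma mem_span (n : ℕ) (m1 m2 : ℕ) (hm : m1 + m2 = en n) :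
    (monomial (Finsupp.single vl 1 + Finsupp.single vcb m1 + Finsupp.single vc m2) 1
        + X vs : MPoly n) ∈ Ideal.span (FF n) := by
  rw [← Ideal.Quotient.eq_zero_iff_mem]
  have hmono : (monomial (Finsupp.single vl 1 + Finsupp.single vcb m1
      + Finsupp.single vc m2) 1 : MPoly n) = X vl * X vcb ^ m1 * X vc ^ m2 := by
    rw [show (X vl : MPoly n) = X vl ^ 1 from (pow_one _).symm, X_pow_eq_monomial,
      X_pow_eq_monomial, X_pow_eq_monomial, monomial_mul, monomial_mul, one_mul, one_mul]
  have h := mainQ n m1 m2 hm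
  have : pr n (monomial (Finsupp.single vl 1 + Finsupp.single vcb m1
      + Finsupp.single vc m2) 1 + X vs) = 0 := by
    rw [map_add, hmono, map_mul, map_mul, map_pow, map_pow, pr_X, pr_X, pr_X, pr_X]
    linear_combination h + xx n vs * two_eq_zero n
  exact this

end Stmt8Aux

open MVar in
/-- If `≼` is a monomial order with `s ≺ α` for every `α ∈ C`, then
`C ⊆ S_𝓕`: every `α ∈ C` is non-residual with respect to `𝓕` and `≼`. -/
theorem stmt8 (n : ℕ) (μ : MonOrd (MVar n))
    (h1 : ∀ α ∈ Cmon n, μ.lt (Finsupp.single vs 1) α) :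
    ∀ α ∈ Cmon n, (monomial α 1 : MPoly n) ∈ SF μ.le (FF n) := by
  rintro α ⟨m1, m2, hm, rfl⟩
  set α := Finsupp.single vl 1 + Finsupp.single vcb m1 + Finsupp.single vc m2 with hα
  have hCα : α ∈ Cmon n := ⟨m1, m2, hm, rfl⟩
  have hlt := h1 α hCα
  have hne : Finsupp.single vs 1 ≠ α := hlt.2
  refine ⟨X vs, Stmt8Aux.mem_span n m1 m2 hm, ?_, ?_⟩
  · -- polyLe
    right
    have hsX : (X vs : MPoly n).support = {Finsupp.single vs 1} := support_X
    have hsM : (monomial α 1 : MPoly n).support = {α} :=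
      support_monomial.trans (if_neg one_ne_zero)
    refine ⟨α, ?_, ?_, ?_⟩
    · rw [hsM]; exact Finset.mem_singleton_self α
    · rw [hsX]
      intro hmem
      rw [Finset.mem_singleton] at hmem
      exact hne hmem.symm
    · intro u hu
      rcases hu with ⟨hu1, _⟩ | ⟨hu1, _⟩
      · rw [hsM, Finset.mem_singleton] at hu1
        subst hu1
        exact μ.le_refl α
      · rw [hsX, Finset.mem_singleton] at hu1
        subst hu1
        exact hlt.1
  · -- g ≠ f
    intro heq
    apply hne
    have hss : (X vs : MPoly n).support = (monomial α 1 : MPoly n).support := by rw [heq]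
    rw [support_X, support_monomial, if_neg one_ne_zero] at hss
    exact Finset.singleton_injective hss
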